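/- Let 𝔮 be the 5-dimensional nilpotent Lie algebra with dual basis e¹,…,e⁵ and structure equations de⁵ = e¹³ + e⁴², deⁱ = 0 for i = 1,…,4 (Chevalley–Eilenberg differential). Set σ₁ = e¹²+e³⁴, σ₂ = e¹³+e⁴², σ₃ = e¹⁴+e²³. Then on 𝔮 ⊕ ℝ (with extra coordinate t and d t = 0 extended by the Leibniz rule), the 2-form ω = d(t·e⁵) = dt ∧ e⁵ + t·σ₂ is closed, and the 3-form Ω⁺ := Re[ t(σ₃ + iσ₁) ∧ (−t^{−2}e⁵ + i t² dt) ] = −t^{−1}·σ₃ ∧ e⁵ − t³·σ₁ ∧ dt satisfies dΩ⁺ = −t^{−1} dt ∧ Ω⁺, equivalently d(t·Ω⁺) = 0. -/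

import Mathlib

set_option maxHeartbeats 1000000


open ExteriorAlgebra

/-- On the nilpotent Lie algebra `𝔮 = (0,0,0,0,13+42)` (Chevalley–Eilenberg
differential `d` with `de⁵ = e¹³ + e⁴²`, `deⁱ = 0` for `i ≤ 4`, extended as a graded
derivation), consider forms on `𝔮 ⊕ ℝ` written as `μ(t) + dt ∧ ν(t)` with exterior
derivative `(μ, ν) ↦ (dμ, μ' − dν)`.  Then `ω = d(t·e⁵) = dt∧e⁵ + t·σ₂` is closed
(both components of its derivative vanish), and
`Ω⁺ = −t⁻¹·σ₃∧e⁵ − t³·σ₁∧dt` (i.e. `μ = −t⁻¹·σ₃∧e⁵`, `ν = −t³·σ₁`) satisfies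
`dΩ⁺ = −t⁻¹·dt∧Ω⁺`, whose components read `dμ = 0` and `μ' − dν = −t⁻¹·μ`. -/
theorem stmt_14
    (d : ExteriorAlgebra ℝ (Fin 5 → ℝ) →ₗ[ℝ] ExteriorAlgebra ℝ (Fin 5 → ℝ))
    (e : Fin 5 → ExteriorAlgebra ℝ (Fin 5 → ℝ))
    (he : ∀ i, e i = ExteriorAlgebra.ι ℝ (Pi.single i 1))
    (σ₁ σ₂ σ₃ : ExteriorAlgebra ℝ (Fin 5 → ℝ))
    (hσ₁ : σ₁ = e 0 * e 1 + e 2 * e 3)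
    (hσ₂ : σ₂ = e 0 * e 2 + e 3 * e 1)
    (hσ₃ : σ₃ = e 0 * e 3 + e 1 * e 2)
    (hd0 : ∀ i : Fin 5, i ≠ 4 → d (e i) = 0)
    (hd4 : d (e 4) = σ₂)
    (hLeib2 : ∀ v w : Fin 5 → ℝ,
      d (ExteriorAlgebra.ι ℝ v * ExteriorAlgebra.ι ℝ w) =
        d (ExteriorAlgebra.ι ℝ v) * ExteriorAlgebra.ι ℝ w -
          ExteriorAlgebra.ι ℝ v * d (ExteriorAlgebra.ι ℝ w))
    (hLeib3 : ∀ u v w : Fin 5 → ℝ,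
      d (ExteriorAlgebra.ι ℝ u * (ExteriorAlgebra.ι ℝ v * ExteriorAlgebra.ι ℝ w)) =
        d (ExteriorAlgebra.ι ℝ u) * (ExteriorAlgebra.ι ℝ v * ExteriorAlgebra.ι ℝ w) -
          ExteriorAlgebra.ι ℝ u * d (ExteriorAlgebra.ι ℝ v) * ExteriorAlgebra.ι ℝ w +
          ExteriorAlgebra.ι ℝ u * ExteriorAlgebra.ι ℝ v * d (ExteriorAlgebra.ι ℝ w)) :
    (∀ t : ℝ, d (t • σ₂) = 0 ∧ (deriv (fun u : ℝ => u) t) • σ₂ - d (e 4) = 0) ∧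
    (∀ t : ℝ, t ≠ 0 →
      d ((-(t⁻¹)) • (σ₃ * e 4)) = 0 ∧
      (deriv (fun u : ℝ => -(u⁻¹)) t) • (σ₃ * e 4) - d ((-(t ^ 3)) • σ₁) =
        (-(t⁻¹)) • ((-(t⁻¹)) • (σ₃ * e 4))) := by
  have key2 : ∀ i j : Fin 5, d (e i * e j) = d (e i) * e j - e i * d (e j) := by
    intro i j; rw [he i, he j]; exact hLeib2 _ _
  have key3 : ∀ i j k : Fin 5, d (e i * (e j * e k)) =
      d (e i) * (e j * e k) - e i * d (e j) * e k + e i * e j * d (e k) := by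
    intro i j k; rw [he i, he j, he k]; exact hLeib3 _ _ _
  have hsq : ∀ i : Fin 5, e i * e i = 0 := by
    intro i; rw [he i]; exact ι_sq_zero _
  have hsw : ∀ i j : Fin 5, e i * e j = -(e j * e i) := by
    intro i j
    have := ι_add_mul_swap (R := ℝ) (M := Fin 5 → ℝ) (Pi.single i 1) (Pi.single j 1)
    rw [he i, he j]
    exact eq_neg_of_add_eq_zero_left this
  -- d σ₁ = d σ₂ = 0
  have hdσ₁ : d σ₁ = 0 := by
    rw [hσ₁, map_add, key2, key2, hd0 0 (by decide), hd0 1 (by decide),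
      hd0 2 (by decide), hd0 3 (by decide)]
    simp
  have hdσ₂ : d σ₂ = 0 := by
    rw [hσ₂, map_add, key2, key2, hd0 0 (by decide), hd0 1 (by decide),
      hd0 2 (by decide), hd0 3 (by decide)]
    simp
  -- σ₃ * σ₂ = 0
  have hmul0 : ∀ i j k : Fin 5, e i * e j * (e i * e k) = 0 := by
    intro i j k
    calc e i * e j * (e i * e k) = e i * (e j * e i) * e k := by noncomm_ring
    _ = -(e i * e i * e j * e k) := by rw [hsw j i]; noncomm_ring
    _ = 0 := by rw [hsq]; simp
  have hmul0' : ∀ i j k : Fin 5, e i * e j * (e j * e k) = 0 := by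
    intro i j k
    calc e i * e j * (e j * e k) = e i * (e j * e j) * e k := by noncomm_ring
    _ = 0 := by rw [hsq]; simp
  have hmul0'' : ∀ i j k : Fin 5, e i * e j * (e k * e j) = 0 := by
    intro i j k
    rw [hsw k j, mul_neg, hmul0' i j k, neg_zero]
  have hσ₃σ₂ : σ₃ * σ₂ = 0 := by
    rw [hσ₃, hσ₂, add_mul, mul_add, mul_add]
    rw [hmul0 0 3 2, hmul0' 0 3 1]
    have h1 : e 1 * e 2 * (e 0 * e 2) = 0 := hmul0'' 1 2 0
    have h2 : e 1 * e 2 * (e 3 * e 1) = 0 := by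
      rw [hsw 3 1, mul_neg, hmul0 1 2 3, neg_zero]
    rw [h1, h2]; simp
  have h034 : d (e 0 * (e 3 * e 4)) = e 0 * e 3 * σ₂ := by
    rw [key3, hd0 0 (by decide), hd0 3 (by decide), hd4]
    simp
  have h124 : d (e 1 * (e 2 * e 4)) = e 1 * e 2 * σ₂ := by
    rw [key3, hd0 1 (by decide), hd0 2 (by decide), hd4]
    simp
  have hdσ₃e4 : d (σ₃ * e 4) = 0 := by
    have h : σ₃ * e 4 = e 0 * (e 3 * e 4) + e 1 * (e 2 * e 4) := by
      rw [hσ₃, add_mul, mul_assoc, mul_assoc]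
    rw [h, map_add, h034, h124, ← add_mul, ← hσ₃, hσ₃σ₂]
  constructor
  · intro t
    refine ⟨by rw [map_smul, hdσ₂, smul_zero], ?_⟩
    rw [hd4]
    simp
  · intro t ht
    refine ⟨by rw [map_smul, hdσ₃e4, smul_zero], ?_⟩
    rw [map_smul, hdσ₁, smul_zero, sub_zero, smul_smul]
    have hder : deriv (fun u : ℝ => -(u⁻¹)) t = (t ^ 2)⁻¹ := by
      rw [deriv.fun_neg, deriv_inv]
      simp
    rw [hder]
    congr 1
    field_simp
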